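/- Let M : ℕ → ℝ be a weight sequence in the class LC. Then the associated weight function ω_M satisfies (ω7), i.e. there exist H > 0, C ≥ 1 and t₀ ≥ 0 such that ω_M(t²) ≤ C·ω_M(H·t) + C for all t ≥ t₀, if and only if there exist a positive integer L (necessarily L ≥ 2) and constants A, B ≥ 1 such that (M_p)^{2L} ≤ A·B^p·M_{L·p} for all p ∈ ℕ. Moreover, this condition implies that there exists a positive integer L with lim_{p→∞} (M_{L·p})^{1/(L·p)} / (M_p)^{1/p} = +∞. -/

import Mathlib

open Filter Real Asymptotics

/-- The associated weight function of a weight sequence `M`. -/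
noncomputable def omegaM (M : ℕ → ℝ) (t : ℝ) : ℝ :=
  if t = 0 then 0 else ⨆ p : ℕ, Real.log (t ^ p / M p)

/-- The class `LC`: positive, normalized, log-convex weight sequences whose
`p`-th roots tend to infinity. -/
def IsLC (M : ℕ → ℝ) : Prop :=
  (∀ p, 0 < M p) ∧ M 0 = 1 ∧ M 0 ≤ M 1 ∧
  (∀ p : ℕ, 1 ≤ p → (M p) ^ 2 ≤ M (p - 1) * M (p + 1)) ∧
  Filter.Tendsto (fun p : ℕ => (M p) ^ (1 / (p : ℝ))) Filter.atTop Filter.atTop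

/-- The quotient sequence `μ_0 = 1`, `μ_p = M_p / M_{p-1}`. -/
noncomputable def mu (M : ℕ → ℝ) (p : ℕ) : ℝ :=
  if p = 0 then 1 else M p / M (p - 1)

/-- Moderate growth `(mg)`. -/
def HasMG (M : ℕ → ℝ) : Prop :=
  ∃ C : ℝ, 1 ≤ C ∧ ∀ p q : ℕ, M (p + q) ≤ C ^ (p + q) * M p * M q

/-- `m_p := M_p / p!`. -/
noncomputable def mseq (M : ℕ → ℝ) (p : ℕ) : ℝ := M p / (Nat.factorial p)

/-- Young conjugate of `x ↦ ω_M(eˣ)`. -/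
noncomputable def phiStar (M : ℕ → ℝ) (y : ℝ) : ℝ :=
  sSup ((fun x => x * y - omegaM M (Real.exp x)) '' Set.Ici (0 : ℝ))

/-- The weight matrix associated with `ω_M`: `M^{(l)}_p := exp((1/l)·φ*(l·p))`. -/
noncomputable def MMat (M : ℕ → ℝ) (l : ℝ) (p : ℕ) : ℝ :=
  Real.exp ((1 / l) * phiStar M (l * p))

/-- `m^{(l)}_p := M^{(l)}_p / p!`. -/
noncomputable def mMat (M : ℕ → ℝ) (l : ℝ) (p : ℕ) : ℝ :=
  MMat M l p / (Nat.factorial p)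

/-- The Roumieu root-almost-increasing condition `(M_{rai})` for the weight matrix
associated with `ω_M`. -/
def MRai (M : ℕ → ℝ) : Prop :=
  ∀ x : ℝ, 0 < x → ∃ C : ℝ, 0 < C ∧ ∃ y : ℝ, 0 < y ∧
    ∀ p q : ℕ, 1 ≤ p → p ≤ q →
      (mMat M x p) ^ (1 / (p : ℝ)) ≤ C * (mMat M y q) ^ (1 / (q : ℝ))

/-- `M ≼ N` : `sup_{p ≥ 1} (M_p/N_p)^{1/p} < ∞`. -/
def Precsim (M N : ℕ → ℝ) : Prop :=
  ∃ A : ℝ, ∀ p : ℕ, 1 ≤ p → (M p / N p) ^ (1 / (p : ℝ)) ≤ A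

/-- `M ≈ N` : mutual `≼`. -/
def Approx (M N : ℕ → ℝ) : Prop := Precsim M N ∧ Precsim N M

/-- Condition `(ω1)` for a weight function. -/
def Omega1 (w : ℝ → ℝ) : Prop :=
  ∃ L : ℝ, 1 ≤ L ∧ ∀ t : ℝ, 0 ≤ t → w (2 * t) ≤ L * (w t + 1)

/-- Condition `(α0)` (in the rewritten form valid for all `t ≥ 0`). -/
def Alpha0 (w : ℝ → ℝ) : Prop :=
  ∃ C : ℝ, 1 ≤ C ∧ ∃ D : ℝ, 1 ≤ D ∧ ∀ lam : ℝ, 1 ≤ lam → ∀ t : ℝ, 0 ≤ t →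
    w (lam * t) ≤ C * lam * w t + D * lam

section Aux

variable {M : ℕ → ℝ}

lemma Mpos (hM : IsLC M) (p : ℕ) : 0 < M p := hM.1 p

lemma mu_succ (p : ℕ) : mu M (p + 1) = M (p + 1) / M p := by
  simp [mu]

lemma M_succ (hM : IsLC M) (p : ℕ) : M (p + 1) = mu M (p + 1) * M p := by
  rw [mu_succ, div_mul_cancel₀]
  exact (hM.1 p).ne'

lemma mu_mono (hM : IsLC M) : Monotone (mu M) := by
  apply monotone_nat_of_le_succ
  intro p
  rcases Nat.eq_zero_or_pos p with rfl | hp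
  · have h1 := hM.2.2.1
    rw [hM.2.1] at h1
    simp [mu, hM.2.1]
    exact h1
  · have hlc := hM.2.2.2.1 p hp
    rw [mu, mu_succ, if_neg (by omega : p ≠ 0)]
    rw [div_le_div_iff₀ (hM.1 (p-1)) (hM.1 p)]
    calc M p * M p = M p ^ 2 := by ring
    _ ≤ M (p-1) * M (p+1) := hlc
    _ = M (p+1) * M (p-1) := by ring

lemma one_le_mu (hM : IsLC M) (p : ℕ) : 1 ≤ mu M p := by
  rcases Nat.eq_zero_or_pos p with rfl | hp
  · simp [mu]
  · calc (1:ℝ) = mu M 0 := by simp [mu]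
    _ ≤ mu M p := mu_mono hM (Nat.zero_le p)

lemma mu_pos (hM : IsLC M) (p : ℕ) : 0 < mu M p := lt_of_lt_of_le one_pos (one_le_mu hM p)

lemma M_mono (hM : IsLC M) : Monotone M := by
  apply monotone_nat_of_le_succ
  intro p
  rw [M_succ hM p]
  nlinarith [one_le_mu hM (p+1), hM.1 p]

lemma one_le_M (hM : IsLC M) (p : ℕ) : 1 ≤ M p := hM.2.1 ▸ M_mono hM (Nat.zero_le p)

/-- If `μ_q ≤ t`, then `M q ≤ t^(q-i) * M i` for `i ≤ q`. -/
lemma M_le_pow (hM : IsLC M) : ∀ (k i : ℕ) {t : ℝ}, mu M (i + k) ≤ t → M (i + k) ≤ t ^ k * M i := by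
  intro k
  induction k with
  | zero => intro i t _; simp
  | succ k ih =>
    intro i t ht
    have hmu : mu M (i + k) ≤ t := le_trans (mu_mono hM (by omega)) ht
    have h1 : M (i + k) ≤ t ^ k * M i := ih i hmu
    have ht0 : (0:ℝ) ≤ t := le_trans (by have := one_le_mu hM (i+(k+1)); linarith) ht
    have : M (i + (k+1)) = mu M (i + k + 1) * M (i + k) := by
      rw [show i + (k+1) = (i + k) + 1 by ring, M_succ hM]
    rw [this, pow_succ]
    calc mu M (i + k + 1) * M (i + k) ≤ t * M (i + k) := by
          apply mul_le_mul_of_nonneg_right ht (le_of_lt (hM.1 _))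
    _ ≤ t * (t ^ k * M i) := by
          apply mul_le_mul_of_nonneg_left h1 ht0
    _ = t ^ k * t * M i := by ring

/-- If `t ≤ μ_{q+1}` and `0 ≤ t`, then `t^k * M q ≤ M (q + k)`. -/
lemma pow_le_M (hM : IsLC M) : ∀ (k q : ℕ) {t : ℝ}, 0 ≤ t → t ≤ mu M (q + 1) → t ^ k * M q ≤ M (q + k) := by
  intro k
  induction k with
  | zero => intro q t _ _; simp
  | succ k ih =>
    intro q t ht0 ht
    have h1 : t ^ k * M q ≤ M (q + k) := ih q ht0 ht
    have h2 : t ≤ mu M (q + k + 1) := le_trans ht (mu_mono hM (by omega))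
    have : M (q + (k+1)) = mu M (q + k + 1) * M (q + k) := by
      rw [show q + (k+1) = (q + k) + 1 by ring, M_succ hM]
    rw [this, pow_succ]
    calc t ^ k * t * M q = t * (t ^ k * M q) := by ring
    _ ≤ t * M (q + k) := mul_le_mul_of_nonneg_left h1 ht0
    _ ≤ mu M (q + k + 1) * M (q + k) := mul_le_mul_of_nonneg_right h2 (le_of_lt (hM.1 _))

lemma bddAbove_log (hM : IsLC M) {t : ℝ} (ht : 0 < t) : BddAbove (Set.range fun p : ℕ => Real.log (t ^ p / M p)) := by
  obtain ⟨N0, hN0⟩ := (Filter.eventually_atTop).mp (hM.2.2.2.2.eventually_ge_atTop (|t| + 1))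
  set N := max N0 1 with hN
  have key : ∀ p : ℕ, N ≤ p → Real.log (t ^ p / M p) ≤ 0 := by
    intro p hp
    have hp1 : 1 ≤ p := le_trans (le_max_right _ _) hp
    have hrt : |t| + 1 ≤ (M p) ^ (1 / (p:ℝ)) := hN0 p (le_trans (le_max_left _ _) hp)
    have hMp : (|t| + 1) ^ p ≤ M p := by
      have h1 : ((M p) ^ (1 / (p:ℝ))) ^ p = M p := by
        rw [← Real.rpow_natCast ((M p) ^ (1 / (p:ℝ))) p, ← Real.rpow_mul (le_of_lt (hM.1 p))]
        rw [one_div_mul_cancel (Nat.cast_ne_zero.mpr (by omega) : (p:ℝ) ≠ 0)]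
        exact Real.rpow_one _
      calc (|t| + 1) ^ p ≤ ((M p) ^ (1 / (p:ℝ))) ^ p := by
            apply pow_le_pow_left₀ (by positivity) hrt
      _ = M p := h1
    apply Real.log_nonpos
    · exact le_of_lt (div_pos (pow_pos ht p) (hM.1 p))
    · rw [div_le_one (hM.1 p)]
      calc t ^ p ≤ |t ^ p| := le_abs_self _
      _ = |t| ^ p := abs_pow t p
      _ ≤ (|t| + 1) ^ p := pow_le_pow_left₀ (abs_nonneg t) (by linarith) p
      _ ≤ M p := hMp
  have hsub : (Set.range fun p : ℕ => Real.log (t ^ p / M p)) ⊆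
      ((fun p : ℕ => Real.log (t ^ p / M p)) '' (Set.Iio N)) ∪ Set.Iic 0 := by
    rintro x ⟨p, rfl⟩
    by_cases hp : p < N
    · exact Or.inl ⟨p, hp, rfl⟩
    · exact Or.inr (key p (not_lt.mp hp))
  exact (((Set.finite_Iio N).image _).bddAbove.union bddAbove_Iic).mono hsub

lemma le_omegaM (hM : IsLC M) {t : ℝ} (ht : 0 < t) (q : ℕ) : Real.log (t ^ q / M q) ≤ omegaM M t := by
  rw [omegaM, if_neg ht.ne']
  exact le_ciSup (bddAbove_log hM ht) q

lemma omegaM_le (hM : IsLC M) {t : ℝ} (q : ℕ) (h1 : mu M q ≤ t) (h2 : t ≤ mu M (q + 1)) :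
    omegaM M t ≤ Real.log (t ^ q / M q) := by
  have ht1 : (1:ℝ) ≤ t := le_trans (one_le_mu hM q) h1
  have ht0 : (0:ℝ) < t := by linarith
  rw [omegaM, if_neg ht0.ne']
  apply ciSup_le
  intro p
  apply Real.log_le_log (div_pos (pow_pos ht0 p) (hM.1 p))
  rw [div_le_div_iff₀ (hM.1 p) (hM.1 q)]
  rcases le_total p q with hpq | hpq
  · obtain ⟨k, rfl⟩ := Nat.exists_eq_add_of_le hpq
    have := M_le_pow hM k p h1
    calc t ^ p * M (p + k) ≤ t ^ p * (t ^ k * M p) := by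
          apply mul_le_mul_of_nonneg_left this (by positivity)
    _ = t ^ (p + k) * M p := by rw [pow_add]; ring
  · obtain ⟨k, rfl⟩ := Nat.exists_eq_add_of_le hpq
    have := pow_le_M hM k q (by linarith) h2
    calc t ^ (q + k) * M q = t ^ q * (t ^ k * M q) := by rw [pow_add]; ring
    _ ≤ t ^ q * M (q + k) := mul_le_mul_of_nonneg_left this (by positivity)

lemma omegaM_nonneg (hM : IsLC M) {t : ℝ} (ht : 1 ≤ t) : 0 ≤ omegaM M t := by
  have h := le_omegaM hM (by linarith : (0:ℝ) < t) 0
  simpa [hM.2.1] using h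

lemma mu_tendsto (hM : IsLC M) : Tendsto (mu M) atTop atTop := by
  apply tendsto_atTop_mono' _ _ hM.2.2.2.2
  filter_upwards [Filter.eventually_ge_atTop 1] with p hp
  have hMp : M p ≤ mu M p ^ p := by
    have := M_le_pow hM p 0 (le_refl (mu M (0 + p)))
    simpa [hM.2.1, Nat.zero_add] using this
  have hmup : (0:ℝ) < mu M p := mu_pos hM p
  calc (M p) ^ (1 / (p:ℝ)) ≤ (mu M p ^ p) ^ (1 / (p:ℝ)) := by
        apply Real.rpow_le_rpow (le_of_lt (hM.1 p)) hMp (by positivity)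
  _ = mu M p := by
        rw [← Real.rpow_natCast (mu M p) p, ← Real.rpow_mul (le_of_lt hmup)]
        rw [mul_one_div_cancel (Nat.cast_ne_zero.mpr (by omega) : (p:ℝ) ≠ 0)]
        exact Real.rpow_one _

end Aux

set_option maxHeartbeats 1000000 in
/-- Proposition 6.1: characterization of `(ω7)` for `ω_M`, and the consequence
that the root quotients tend to infinity along multiples. -/
theorem stmt19 (M : ℕ → ℝ) (hM : IsLC M) :
    ((∃ H : ℝ, 0 < H ∧ ∃ C : ℝ, 1 ≤ C ∧ ∃ t0 : ℝ, 0 ≤ t0 ∧ ∀ t : ℝ, t0 ≤ t →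
        omegaM M (t ^ 2) ≤ C * omegaM M (H * t) + C) ↔
      (∃ L : ℕ, 1 ≤ L ∧ ∃ A : ℝ, 1 ≤ A ∧ ∃ B : ℝ, 1 ≤ B ∧
        ∀ p : ℕ, (M p) ^ (2 * L) ≤ A * B ^ p * M (L * p))) ∧
    ((∃ L : ℕ, 1 ≤ L ∧ ∃ A : ℝ, 1 ≤ A ∧ ∃ B : ℝ, 1 ≤ B ∧
        ∀ p : ℕ, (M p) ^ (2 * L) ≤ A * B ^ p * M (L * p)) →
      ∃ L : ℕ, 1 ≤ L ∧ Filter.Tendsto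
        (fun p : ℕ => (M (L * p)) ^ (1 / ((L : ℝ) * p)) / (M p) ^ (1 / (p : ℝ)))
        Filter.atTop Filter.atTop) := by
  constructor
  · constructor
    · -- (ω7) → condition
      rintro ⟨H, hH, C, hC, t0, ht0, hw⟩
      set L : ℕ := max 1 (Nat.ceil C) with hLdef
      have hL1 : 1 ≤ L := le_max_left _ _
      have hL1' : (1:ℝ) ≤ (L:ℝ) := by exact_mod_cast hL1
      have hCL : C ≤ (L:ℝ) := by
        refine le_trans (Nat.le_ceil C) ?_
        exact_mod_cast le_max_right 1 (Nat.ceil C)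
      set B : ℝ := max (H ^ (2*L)) 1 with hBdef
      have hB1 : (1:ℝ) ≤ B := le_max_right _ _
      have hB0 : (0:ℝ) < B := by linarith
      have hlogB : 2*(L:ℝ)*Real.log H ≤ Real.log B := by
        have h := Real.log_le_log (pow_pos hH (2*L)) (le_max_left (H ^ (2*L)) 1)
        rw [Real.log_pow] at h
        push_cast at h
        linarith
      obtain ⟨N, hN⟩ := (Filter.eventually_atTop).mp
        ((mu_tendsto hM).eventually_ge_atTop (max (H*t0) 1))
      have key : ∀ p : ℕ, N ≤ p → M p ^ (2*L) ≤ Real.exp C * B^p * M (L*p) := by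
        intro p hNp
        have hs := hN (p+1) (by omega)
        set s := mu M (p+1) with hsdef
        have hs1 : (1:ℝ) ≤ s := le_trans (le_max_right _ _) hs
        have hs0 : (0:ℝ) < s := by linarith
        have hst0 : H * t0 ≤ s := le_trans (le_max_left _ _) hs
        set t := s / H with htdef
        have htt0 : t0 ≤ t := by
          rw [htdef, le_div_iff₀ hH]; linarith
        have ht0' : (0:ℝ) < t := div_pos hs0 hH
        have hHt : H * t = s := by
          rw [htdef]; field_simp
        have h1 : Real.log ((t^2)^(L*p) / M (L*p)) ≤ omegaM M (t^2) :=
          le_omegaM hM (by positivity) (L*p)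
        have h2 := hw t htt0
        have h3 : omegaM M (H*t) ≤ Real.log (s^p / M p) := by
          rw [hHt]
          exact omegaM_le hM p (mu_mono hM (Nat.le_succ p)) (le_refl _)
        have h4 : C * omegaM M (H*t) ≤ C * Real.log (s^p / M p) :=
          mul_le_mul_of_nonneg_left h3 (by linarith)
        have e1 : Real.log ((t^2)^(L*p) / M (L*p)) =
            2*((L:ℝ)*p)*(Real.log s - Real.log H) - Real.log (M (L*p)) := by
          rw [Real.log_div (pow_ne_zero _ (pow_ne_zero _ ht0'.ne')) (hM.1 _).ne',
            Real.log_pow, Real.log_pow, htdef, Real.log_div hs0.ne' hH.ne']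
          push_cast; ring
        have e2 : Real.log (s^p / M p) = p * Real.log s - Real.log (M p) := by
          rw [Real.log_div (by positivity) (hM.1 p).ne', Real.log_pow]
        rw [e1] at h1
        rw [e2] at h4
        have hMs : Real.log (M p) ≤ p * Real.log s := by
          have h' : M p ≤ s ^ p := by
            have := M_le_pow hM p 0 (show mu M (0+p) ≤ s from by
              simpa using mu_mono hM (Nat.le_succ p))
            simpa [hM.2.1] using this
          have := Real.log_le_log (hM.1 p) h'
          rwa [Real.log_pow] at this
        have hls : 0 ≤ Real.log s := Real.log_nonneg hs1
        have sc1 : (2*(L:ℝ) - C) * Real.log (M p) ≤ (2*(L:ℝ) - C) * ((p:ℝ) * Real.log s) :=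
          mul_le_mul_of_nonneg_left hMs (by linarith)
        have sc2 : (p:ℝ) * (2*(L:ℝ)*Real.log H) ≤ (p:ℝ) * Real.log B :=
          mul_le_mul_of_nonneg_left hlogB (by positivity)
        have final_log : 2*(L:ℝ)*Real.log (M p) ≤ C + p*Real.log B + Real.log (M (L*p)) := by
          nlinarith [h1, h2, h4, sc1, sc2]
        have lhs_eq : Real.log (M p ^ (2*L)) = 2*(L:ℝ)*Real.log (M p) := by
          rw [Real.log_pow]; push_cast; ring
        have rhs_eq : Real.log (Real.exp C * B^p * M (L*p)) =
            C + p*Real.log B + Real.log (M (L*p)) := by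
          rw [Real.log_mul (by positivity) (hM.1 _).ne',
            Real.log_mul (Real.exp_ne_zero C) (by positivity),
            Real.log_exp, Real.log_pow]
        have hgoal : Real.log (M p ^ (2*L)) ≤ Real.log (Real.exp C * B^p * M (L*p)) := by
          rw [lhs_eq, rhs_eq]; exact final_log
        exact (Real.log_le_log_iff (pow_pos (hM.1 p) (2*L)) (mul_pos (mul_pos (Real.exp_pos C) (pow_pos hB0 p)) (hM.1 (L*p)))).mp hgoal
      set S : ℝ := ∑ q ∈ Finset.range N, M q ^ (2*L) / (B^q * M (L*q)) with hSdef
      have hSnn : 0 ≤ S := by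
        apply Finset.sum_nonneg
        intro q _
        have := hM.1 q
        have := hM.1 (L*q)
        positivity
      have hexpC : (1:ℝ) ≤ Real.exp C := by
        rw [show (1:ℝ) = Real.exp 0 by simp]
        exact Real.exp_le_exp.mpr (by linarith)
      refine ⟨L, hL1, Real.exp C + S, by linarith, B, hB1, ?_⟩
      intro p
      have hpos : (0:ℝ) < B^p * M (L*p) := mul_pos (pow_pos hB0 p) (hM.1 _)
      by_cases hp : N ≤ p
      · have h := key p hp
        calc M p ^ (2*L) ≤ Real.exp C * B^p * M (L*p) := h
        _ = Real.exp C * (B^p * M (L*p)) := by ring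
        _ ≤ (Real.exp C + S) * (B^p * M (L*p)) := by
            apply mul_le_mul_of_nonneg_right (by linarith) (le_of_lt hpos)
        _ = (Real.exp C + S) * B^p * M (L*p) := by ring
      · have hterm : M p ^ (2*L) / (B^p * M (L*p)) ≤ S := by
          apply Finset.single_le_sum (f := fun q => M q ^ (2*L) / (B^q * M (L*q)))
          · intro q _
            have := hM.1 q
            have := hM.1 (L*q)
            positivity
          · exact Finset.mem_range.mpr (by omega)
        rw [div_le_iff₀ hpos] at hterm
        calc M p ^ (2*L) ≤ S * (B^p * M (L*p)) := hterm
        _ ≤ (Real.exp C + S) * (B^p * M (L*p)) := by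
            apply mul_le_mul_of_nonneg_right (by linarith) (le_of_lt hpos)
        _ = (Real.exp C + S) * B^p * M (L*p) := by ring
    · -- condition → (ω7)
      rintro ⟨L, hL, A, hA, B, hB, hcond⟩
      have hL1' : (1:ℝ) ≤ (L:ℝ) := by exact_mod_cast hL
      have hlA : 0 ≤ Real.log A := Real.log_nonneg hA
      have hlB : 0 ≤ Real.log B := Real.log_nonneg hB
      have hlM1 : 0 ≤ Real.log (M 1) := Real.log_nonneg (one_le_M hM 1)
      refine ⟨B, by linarith, 4*(L:ℝ) + 2*(L:ℝ)*Real.log (M 1) + Real.log A, ?_, 1,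
        zero_le_one, ?_⟩
      · nlinarith
      intro t ht
      have ht0 : (0:ℝ) < t := by linarith
      have hBt1 : (1:ℝ) ≤ B * t := by nlinarith
      have hBt0 : (0:ℝ) < B * t := by linarith
      have hw0 : 0 ≤ omegaM M (B*t) := omegaM_nonneg hM hBt1
      have hlt : 0 ≤ Real.log t := Real.log_nonneg ht
      have hlBt : Real.log (B*t) = Real.log B + Real.log t := Real.log_mul (by linarith) ht0.ne'
      rw [omegaM, if_neg (pow_ne_zero 2 ht0.ne')]
      apply ciSup_le
      intro r
      set p := r / L with hpdef
      have hmlt : r % L < L := Nat.mod_lt r (by omega)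
      have hLpr : L * p ≤ r := Nat.le.intro (Nat.div_add_mod r L)
      have hrlt : r < L * (p+1) := by
        calc r = L * p + r % L := (Nat.div_add_mod r L).symm
        _ < L * p + L := Nat.add_lt_add_left hmlt _
        _ = L * (p + 1) := by ring
      have hrle : (r:ℝ) ≤ (L:ℝ)*((p:ℝ)+1) := by exact_mod_cast Nat.le_of_lt hrlt
      have hlog1 : Real.log ((t^2)^r / M r) = 2*(r:ℝ)*Real.log t - Real.log (M r) := by
        rw [Real.log_div (pow_ne_zero _ (pow_ne_zero _ ht0.ne')) (hM.1 r).ne',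
          Real.log_pow, Real.log_pow]
        push_cast; ring
      have hMr : Real.log (M (L*p)) ≤ Real.log (M r) :=
        Real.log_le_log (hM.1 _) (M_mono hM hLpr)
      have hcl : 2*(L:ℝ) * Real.log (M p) ≤
          Real.log A + p * Real.log B + Real.log (M (L*p)) := by
        have h := Real.log_le_log (pow_pos (hM.1 p) (2*L)) (hcond p)
        rw [Real.log_pow, Real.log_mul (by positivity) (hM.1 _).ne',
          Real.log_mul (by linarith : A ≠ 0) (by positivity), Real.log_pow] at h
        push_cast at h
        linarith
      have h3 : (p:ℝ) * (Real.log B + Real.log t) - Real.log (M p) ≤ omegaM M (B*t) := by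
        have := le_omegaM hM hBt0 p
        rw [Real.log_div (by positivity) (hM.1 p).ne', Real.log_pow, hlBt] at this
        exact this
      have h4 : Real.log B + Real.log t - Real.log (M 1) ≤ omegaM M (B*t) := by
        have := le_omegaM hM hBt0 1
        rw [Real.log_div (by positivity) (hM.1 1).ne', pow_one, hlBt] at this
        exact this
      have P1 : 2*(r:ℝ)*Real.log t ≤ 2*((L:ℝ)*((p:ℝ)+1))*Real.log t := by
        have := mul_le_mul_of_nonneg_right hrle hlt
        linarith
      have P2 : (p:ℝ)*Real.log B ≤ 2*((L:ℝ)*((p:ℝ)+1))*Real.log B := by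
        have hple : (p:ℝ) ≤ 2*((L:ℝ)*((p:ℝ)+1)) := by nlinarith [Nat.cast_nonneg (α := ℝ) p]
        exact mul_le_mul_of_nonneg_right hple hlB
      have P3 : 2*(L:ℝ)*((p:ℝ) * (Real.log B + Real.log t) - Real.log (M p)) ≤
          2*(L:ℝ)*omegaM M (B*t) := mul_le_mul_of_nonneg_left h3 (by linarith)
      have P4 : 2*(L:ℝ)*(Real.log B + Real.log t - Real.log (M 1)) ≤
          2*(L:ℝ)*omegaM M (B*t) := mul_le_mul_of_nonneg_left h4 (by linarith)
      have P5 : 0 ≤ 2*(L:ℝ)*Real.log (M 1) * omegaM M (B*t) := by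
        apply mul_nonneg _ hw0
        nlinarith
      have P6 : 0 ≤ Real.log A * omegaM M (B*t) := mul_nonneg hlA hw0
      rw [hlog1]
      linarith [P1, P2, P3, P4, P5, P6, hMr, hcl, hw0, hlt, hlB, hlA, hlM1, hL1']
  · -- condition → ratio tends to infinity
    rintro ⟨L, hL, A, hA, B, hB, hcond⟩
    have hL0 : (0:ℝ) < (L:ℝ) := by exact_mod_cast Nat.lt_of_lt_of_le Nat.zero_lt_one hL
    have hB0 : (0:ℝ) < B := by linarith
    set c : ℝ := A * B ^ ((1:ℝ)/(L:ℝ)) with hcdef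
    have hc0 : (0:ℝ) < c := by positivity
    refine ⟨L, hL, ?_⟩
    apply tendsto_atTop_mono' atTop ?_ ((hM.2.2.2.2).atTop_div_const hc0)
    filter_upwards [Filter.eventually_ge_atTop 1] with p hp
    have hp0 : (0:ℝ) < (p:ℝ) := by exact_mod_cast Nat.lt_of_lt_of_le Nat.zero_lt_one hp
    have hL1' : (1:ℝ) ≤ (L:ℝ) := by exact_mod_cast hL
    have hp1' : (1:ℝ) ≤ (p:ℝ) := by exact_mod_cast hp
    have hLp0 : (0:ℝ) < (L:ℝ)*(p:ℝ) := by positivity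
    have hx : (0:ℝ) < (M p) ^ (1/(p:ℝ)) := Real.rpow_pos_of_pos (hM.1 p) _
    have hy : (0:ℝ) < (M (L*p)) ^ (1/((L:ℝ)*(p:ℝ))) := Real.rpow_pos_of_pos (hM.1 _) _
    rw [div_le_div_iff₀ hc0 hx]
    -- goal : M p ^ (1/p) * M p ^ (1/p) ≤ M (L*p)^(1/(L p)) * c
    have hkey : (M p) ^ ((2:ℝ)/(p:ℝ)) ≤ c * (M (L*p)) ^ (1/((L:ℝ)*(p:ℝ))) := by
      have h := hcond p
      have h2 := Real.rpow_le_rpow (pow_nonneg (le_of_lt (hM.1 p)) (2*L)) h (le_of_lt (one_div_pos.mpr hLp0))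
      have lhs_eq : ((M p ^ (2*L) : ℝ)) ^ (1/((L:ℝ)*(p:ℝ))) = (M p) ^ ((2:ℝ)/(p:ℝ)) := by
        rw [← Real.rpow_natCast (M p) (2*L), ← Real.rpow_mul (le_of_lt (hM.1 p))]
        congr 1
        push_cast
        field_simp
      have rhs_le : ((A * B^p * M (L*p) : ℝ)) ^ (1/((L:ℝ)*(p:ℝ))) ≤
          c * (M (L*p)) ^ (1/((L:ℝ)*(p:ℝ))) := by
        rw [Real.mul_rpow (mul_nonneg (by linarith : (0:ℝ) ≤ A)
            (pow_nonneg (by linarith) p)) (le_of_lt (hM.1 _)),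
          Real.mul_rpow (by linarith : (0:ℝ) ≤ A) (pow_nonneg (by linarith) p)]
        apply mul_le_mul_of_nonneg_right _ (le_of_lt hy)
        rw [hcdef]
        have hAbound : A ^ (1/((L:ℝ)*(p:ℝ))) ≤ A := by
          have h1 : A ^ (1/((L:ℝ)*(p:ℝ))) ≤ A ^ (1:ℝ) := by
            apply Real.rpow_le_rpow_of_exponent_le hA
            rw [div_le_one hLp0]
            nlinarith [hL1', hp1']
          rwa [Real.rpow_one] at h1
        have hBeq : (B ^ p) ^ (1/((L:ℝ)*(p:ℝ))) = B ^ ((1:ℝ)/(L:ℝ)) := by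
          rw [← Real.rpow_natCast B p, ← Real.rpow_mul (le_of_lt hB0)]
          congr 1
          field_simp
        apply mul_le_mul hAbound (le_of_eq hBeq) (by positivity) (by linarith)
      calc (M p) ^ ((2:ℝ)/(p:ℝ)) = ((M p ^ (2*L) : ℝ)) ^ (1/((L:ℝ)*(p:ℝ))) := lhs_eq.symm
      _ ≤ ((A * B^p * M (L*p) : ℝ)) ^ (1/((L:ℝ)*(p:ℝ))) := h2
      _ ≤ c * (M (L*p)) ^ (1/((L:ℝ)*(p:ℝ))) := rhs_le
    have hsq : (M p) ^ ((2:ℝ)/(p:ℝ)) = (M p) ^ (1/(p:ℝ)) * (M p) ^ (1/(p:ℝ)) := by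
      rw [← Real.rpow_add (hM.1 p)]
      congr 1
      ring
    calc (M p) ^ (1/(p:ℝ)) * (M p) ^ (1/(p:ℝ)) = (M p) ^ ((2:ℝ)/(p:ℝ)) := hsq.symm
    _ ≤ c * (M (L*p)) ^ (1/((L:ℝ)*(p:ℝ))) := hkey
    _ = (M (L*p)) ^ (1/((L:ℝ)*(p:ℝ))) * c := by ring
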